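/- arXiv:1604.00753 — 2 statements merged into one kernel-verified Lean document; each statement's English description precedes it below -/
import Mathlib

section
/- For every positive integer n, the n-th Fourier cosine coefficient of x·Cl₂(2πx) on (0,1) satisfies 2·∫₀¹ x·Cl₂(2πx)·cos(2nπx) dx = (1/π)·(H_n/n² − 3/(2n³)), where H_n is the n-th harmonic number. -/
open Real MeasureTheory

lemma integral_x_sin (c : ℝ) (hc : c ≠ 0) :
    ∫ x in (0:ℝ)..1, x * Real.sin (c * x) = Real.sin c / c ^ 2 - Real.cos c / c := by
  have h : ∀ x ∈ Set.uIcc (0:ℝ) 1, HasDerivAt (fun x : ℝ => Real.sin (c * x) / c ^ 2 - x * Real.cos (c * x) / c)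
      (x * Real.sin (c * x)) x := by
    intro x _
    have h1 : HasDerivAt (fun x : ℝ => c * x) c x := by
      simpa using (hasDerivAt_id x).const_mul c
    have hs : HasDerivAt (fun x : ℝ => Real.sin (c * x)) (Real.cos (c * x) * c) x := h1.sin
    have hcx : HasDerivAt (fun x : ℝ => Real.cos (c * x)) (-Real.sin (c * x) * c) x := h1.cos
    have h2 : HasDerivAt (fun x : ℝ => x * Real.cos (c * x))
        (1 * Real.cos (c * x) + x * (-Real.sin (c * x) * c)) x := (hasDerivAt_id x).mul hcx
    have := (hs.div_const (c ^ 2)).sub (h2.div_const c)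
    convert this using 1
    · rfl
    · rfl
    · rfl
    field_simp
    ring
  have hint : IntervalIntegrable (fun x : ℝ => x * Real.sin (c * x)) volume 0 1 :=
    (continuous_id.mul (Real.continuous_sin.comp (continuous_const.mul continuous_id))).intervalIntegrable 0 1
  rw [intervalIntegral.integral_eq_sub_of_hasDerivAt h hint]
  simp

lemma integral_x_sin_int (j : ℤ) (hj : j ≠ 0) :
    ∫ x in (0:ℝ)..1, x * Real.sin ((2 * π * j) * x) = -(1 / (2 * π * j)) := by
  have hjr : (j:ℝ) ≠ 0 := Int.cast_ne_zero.mpr hj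
  have hc : (2 * π * (j:ℝ)) ≠ 0 := by
    have h1 := Real.pi_ne_zero
    positivity
  rw [integral_x_sin _ hc]
  have hs : Real.sin (2 * π * j) = 0 := by
    have := Real.sin_int_mul_pi (2*j)
    push_cast at this
    rw [← this]; ring_nf
  have hcos : Real.cos (2 * π * j) = 1 := by
    have := Real.cos_int_mul_two_pi j
    rw [← this]; ring_nf
  rw [hs, hcos]
  field_simp
  ring

lemma integral_x_sin_cos (m n : ℕ) (hm : 0 < m) (hn : 0 < n) :
    ∫ x in (0:ℝ)..1, x * Real.sin (2 * π * m * x) * Real.cos (2 * π * n * x) =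
      -(1/(4*π)) * (1 / ((m:ℝ) + n) + if (m:ℝ) = (n:ℝ) then 0 else 1 / ((m:ℝ) - n)) := by
  have key : ∀ x : ℝ, x * Real.sin (2 * π * m * x) * Real.cos (2 * π * n * x)
      = (x * Real.sin ((2 * π * ((m:ℝ) + n)) * x) + x * Real.sin ((2 * π * ((m:ℝ) - n)) * x)) / 2 := by
    intro x
    have h1 := Real.sin_add (2 * π * m * x) (2 * π * n * x)
    have h2 := Real.sin_sub (2 * π * m * x) (2 * π * n * x)
    have e1 : (2 * π * ((m:ℝ) + n)) * x = 2 * π * m * x + 2 * π * n * x := by ring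
    have e2 : (2 * π * ((m:ℝ) - n)) * x = 2 * π * m * x - 2 * π * n * x := by ring
    rw [e1, e2, h1, h2]
    ring
  simp only [key]
  have ha : IntervalIntegrable (fun x : ℝ => x * Real.sin ((2 * π * ((m:ℝ) + n)) * x)) volume 0 1 :=
    (continuous_id.mul (Real.continuous_sin.comp (continuous_const.mul continuous_id))).intervalIntegrable 0 1
  have hb : IntervalIntegrable (fun x : ℝ => x * Real.sin ((2 * π * ((m:ℝ) - n)) * x)) volume 0 1 :=
    (continuous_id.mul (Real.continuous_sin.comp (continuous_const.mul continuous_id))).intervalIntegrable 0 1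
  rw [intervalIntegral.integral_div, intervalIntegral.integral_add ha hb]
  have hA : ∫ x in (0:ℝ)..1, x * Real.sin ((2 * π * ((m:ℝ) + n)) * x) = -(1 / (2 * π * ((m:ℝ)+n))) := by
    have := integral_x_sin_int ((m:ℤ) + n) (by omega)
    push_cast at this
    exact this
  rw [hA]
  rcases eq_or_ne (m:ℝ) (n:ℝ) with h | h
  · have : (2 * π * ((m:ℝ) - n)) = 0 := by rw [h]; ring
    rw [this]
    simp only [h, if_pos rfl]
    simp
    ring
  · have hB : ∫ x in (0:ℝ)..1, x * Real.sin ((2 * π * ((m:ℝ) - n)) * x) = -(1 / (2 * π * ((m:ℝ)-n))) := by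
      have := integral_x_sin_int ((m:ℤ) - n) (by
        intro hc
        apply h
        have : ((m:ℤ):ℝ) = ((n:ℤ):ℝ) := by
          have := sub_eq_zero.mp hc
          exact_mod_cast this
        exact_mod_cast this)
      push_cast at this
      exact this
    rw [hB]
    have hmn : (m:ℝ) + n ≠ 0 := by positivity
    have hmn2 : (m:ℝ) - n ≠ 0 := sub_ne_zero.mpr h
    have hpi := Real.pi_ne_zero
    rw [if_neg h]
    field_simp
    ring

lemma telescope_base (j : ℕ) :
    HasSum (fun k : ℕ => 1/((k:ℝ)+(j:ℝ)+1) - 1/((k:ℝ)+(j:ℝ)+2)) (1/((j:ℝ)+1)) := by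
  have hnn : ∀ k : ℕ, 0 ≤ 1/((k:ℝ)+(j:ℝ)+1) - 1/((k:ℝ)+(j:ℝ)+2) := by
    intro k
    have h1 : (0:ℝ) < (k:ℝ)+(j:ℝ)+1 := by positivity
    have h2 : ((k:ℝ)+(j:ℝ)+1) ≤ ((k:ℝ)+(j:ℝ)+2) := by linarith
    have := one_div_le_one_div_of_le h1 h2
    linarith
  rw [hasSum_iff_tendsto_nat_of_nonneg hnn]
  have hps : ∀ K : ℕ, ∑ k ∈ Finset.range K, (1/((k:ℝ)+(j:ℝ)+1) - 1/((k:ℝ)+(j:ℝ)+2))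
      = 1/((j:ℝ)+1) - 1/((K:ℝ)+(j:ℝ)+1) := by
    intro K
    calc ∑ k ∈ Finset.range K, (1/((k:ℝ)+(j:ℝ)+1) - 1/((k:ℝ)+(j:ℝ)+2))
        = ∑ k ∈ Finset.range K, ((fun k : ℕ => 1/((k:ℝ)+(j:ℝ)+1)) k - (fun k : ℕ => 1/((k:ℝ)+(j:ℝ)+1)) (k+1)) := by
          apply Finset.sum_congr rfl
          intro i _
          push_cast
          ring_nf
      _ = (fun k : ℕ => 1/((k:ℝ)+(j:ℝ)+1)) 0 - (fun k : ℕ => 1/((k:ℝ)+(j:ℝ)+1)) K :=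
          Finset.sum_range_sub' _ K
      _ = 1/((j:ℝ)+1) - 1/((K:ℝ)+(j:ℝ)+1) := by push_cast; ring_nf
  simp only [hps]
  have : Filter.Tendsto (fun K : ℕ => 1/((K:ℝ)+(j:ℝ)+1)) Filter.atTop (nhds 0) := by
    simp only [one_div]
    apply Filter.Tendsto.inv_tendsto_atTop
    apply Filter.tendsto_atTop_add_const_right
    apply Filter.tendsto_atTop_add_const_right
    exact tendsto_natCast_atTop_atTop
  have := Filter.Tendsto.const_sub (1/((j:ℝ)+1)) this
  simpa using this

lemma telescope_harmonic (n : ℕ) :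
    HasSum (fun k : ℕ => 1/((k:ℝ)+1) - 1/((k:ℝ)+1+(n:ℝ))) ((harmonic n : ℝ)) := by
  induction n with
  | zero => simpa using hasSum_zero
  | succ n ih =>
    have hb := telescope_base n
    have := ih.add hb
    have he : (fun k : ℕ => (1/((k:ℝ)+1) - 1/((k:ℝ)+1+(n:ℝ))) + (1/((k:ℝ)+(n:ℝ)+1) - 1/((k:ℝ)+(n:ℝ)+2)))
        = fun k : ℕ => 1/((k:ℝ)+1) - 1/((k:ℝ)+1+((n:ℕ)+1:ℕ)) := by
      funext k
      push_cast
      ring_nf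
    rw [he] at this
    convert this using 1
    rw [harmonic_succ]
    push_cast
    ring

lemma harmonic_cast (m : ℕ) : ((harmonic m : ℚ) : ℝ) = ∑ i ∈ Finset.range m, 1/((i:ℝ)+1) := by
  rw [harmonic]
  push_cast
  simp [one_div]

lemma hasSum_Q (n : ℕ) (hn : 0 < n) :
    HasSum (fun k : ℕ => if k + 1 = n then 1/(n:ℝ)^3
        else (1/(n:ℝ)^2) * (1/((k:ℝ)+1-(n:ℝ)) - 1/((k:ℝ)+1)))
      ((harmonic n : ℝ)/(n:ℝ)^2 + 1/(n:ℝ)^3 - 2*((harmonic (n-1) : ℚ) : ℝ)/(n:ℝ)^2) := by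
  set Q : ℕ → ℝ := fun k => if k + 1 = n then 1/(n:ℝ)^3
      else (1/(n:ℝ)^2) * (1/((k:ℝ)+1-(n:ℝ)) - 1/((k:ℝ)+1)) with hQ
  have htail : HasSum (fun j : ℕ => Q (j + n)) ((harmonic n : ℝ)/(n:ℝ)^2) := by
    have := (telescope_harmonic n).mul_left (1/(n:ℝ)^2)
    have he : (fun k : ℕ => (1/(n:ℝ)^2) * (1/((k:ℝ)+1) - 1/((k:ℝ)+1+(n:ℝ))))
        = fun j : ℕ => Q (j + n) := by
      funext j
      rw [hQ]
      have h1 : ¬ (j + n + 1 = n) := by omega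
      simp only [h1, if_false]
      push_cast
      ring_nf
    rw [he] at this
    convert this using 1
    · rfl
    ring
  have := (hasSum_nat_add_iff n).mp htail
  convert this using 1
  · rfl
  obtain ⟨m, rfl⟩ : ∃ m, n = m + 1 := ⟨n - 1, by omega⟩
  rw [Finset.sum_range_succ]
  have hm : Q m = 1/((m:ℝ)+1)^3 := by rw [hQ]; simp
  have hsum : ∑ i ∈ Finset.range m, Q i
      = (1/((m:ℝ)+1)^2) * (∑ i ∈ Finset.range m, (1/((i:ℝ)+1-((m:ℝ)+1)))
          - ∑ i ∈ Finset.range m, 1/((i:ℝ)+1)) := by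
    rw [← Finset.sum_sub_distrib, Finset.mul_sum]
    apply Finset.sum_congr rfl
    intro i hi
    have h1 : ¬ (i + 1 = m + 1) := by have := Finset.mem_range.mp hi; omega
    rw [hQ]
    simp only [h1, if_false]
    push_cast
    ring
  have hrefl : ∑ i ∈ Finset.range m, (1/((i:ℝ)+1-((m:ℝ)+1)))
      = - ∑ i ∈ Finset.range m, 1/((i:ℝ)+1) := by
    rw [← Finset.sum_range_reflect (fun i : ℕ => 1/((i:ℝ)+1-((m:ℝ)+1))) m, ← Finset.sum_neg_distrib]
    apply Finset.sum_congr rfl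
    intro j hj
    have hj' : j < m := Finset.mem_range.mp hj
    have hc : ((m - 1 - j : ℕ) : ℝ) = (m:ℝ) - 1 - (j:ℝ) := by
      have h2 : (1:ℕ) + j ≤ m := by omega
      rw [Nat.sub_sub, Nat.cast_sub h2]
      push_cast
      ring
    rw [hc, show (m:ℝ)-1-(j:ℝ)+1-((m:ℝ)+1) = -((j:ℝ)+1) by ring, one_div, inv_neg, ← one_div]
  rw [hm, hsum, hrefl, harmonic_cast]
  have hm1 : (m + 1 : ℕ) - 1 = m := by omega
  rw [hm1, harmonic_cast]
  push_cast
  ring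

/-- The Clausen function `Cl₂(θ) = ∑_{k=1}^∞ sin(kθ)/k²`. -/
noncomputable def Cl2 (θ : ℝ) : ℝ := ∑' k : ℕ, Real.sin ((k + 1) * θ) / ((k : ℝ) + 1) ^ 2

/-- For every positive integer `n`, the `n`-th Fourier cosine coefficient of
`x·Cl₂(2πx)` on `(0,1)`:
`2·∫₀¹ x·Cl₂(2πx)·cos(2nπx) dx = (1/π)·(H_n/n² − 3/(2n³))`. -/
theorem fourier_cos_coeff_x_mul_Cl2 (n : ℕ) (hn : 0 < n) :
    2 * ∫ x in (0:ℝ)..1, x * Cl2 (2 * π * x) * Real.cos (2 * n * π * x) =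
      (1 / π) * ((harmonic n : ℝ) / (n : ℝ) ^ 2 - 3 / (2 * (n : ℝ) ^ 3)) := by
  have hπ := Real.pi_ne_zero
  have hπpos := Real.pi_pos
  have hnR : (0:ℝ) < n := by exact_mod_cast hn
  -- the summand functions
  set f : ℕ → ℝ → ℝ := fun k x =>
    x * (Real.sin (((k:ℝ) + 1) * (2 * π * x)) / ((k : ℝ) + 1) ^ 2) * Real.cos (2 * n * π * x)
    with hf
  -- pointwise identity
  have hpt : ∀ x : ℝ, x * Cl2 (2 * π * x) * Real.cos (2 * n * π * x) = ∑' k, f k x := by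
    intro x
    rw [hf]
    simp only
    symm
    calc (∑' k : ℕ, x * (Real.sin (((k:ℝ) + 1) * (2 * π * x)) / ((k : ℝ) + 1) ^ 2)
            * Real.cos (2 * n * π * x))
        = ∑' k : ℕ, (Real.sin (((k:ℝ) + 1) * (2 * π * x)) / ((k : ℝ) + 1) ^ 2)
            * (x * Real.cos (2 * n * π * x)) := by
          apply tsum_congr; intro k; ring
      _ = Cl2 (2 * π * x) * (x * Real.cos (2 * n * π * x)) := by
          rw [Cl2, tsum_mul_right]
      _ = x * Cl2 (2 * π * x) * Real.cos (2 * n * π * x) := by ring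
  -- continuity / integrability of each summand
  have hcont : ∀ k : ℕ, Continuous (f k) := by
    intro k
    rw [hf]
    fun_prop
  have hint : ∀ k : ℕ, IntegrableOn (f k) (Set.Ioc (0:ℝ) 1) volume := fun k =>
    (hcont k).integrableOn_Ioc
  -- norm bound
  have hbound : ∀ k : ℕ, ∫ x in Set.Ioc (0:ℝ) 1, ‖f k x‖ ≤ 1/((k:ℝ)+1)^2 := by
    intro k
    have h1 : ∫ x in Set.Ioc (0:ℝ) 1, (1/((k:ℝ)+1)^2 : ℝ) = 1/((k:ℝ)+1)^2 := by
      rw [MeasureTheory.setIntegral_const]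
      simp [Real.volume_Ioc]
    rw [← h1]
    apply MeasureTheory.setIntegral_mono_on
    · exact (hint k).norm
    · exact MeasureTheory.integrableOn_const (by simp [Real.volume_Ioc])
    · exact measurableSet_Ioc
    · intro x hx
      obtain ⟨hx0, hx1⟩ := hx
      rw [hf]
      simp only [Real.norm_eq_abs, abs_mul, abs_div]
      have hk : (0:ℝ) < ((k:ℝ)+1)^2 := by positivity
      have h2 : |x| ≤ 1 := by rw [abs_of_pos hx0]; exact hx1
      have h3 : |Real.sin (((k:ℝ) + 1) * (2 * π * x))| ≤ 1 := Real.abs_sin_le_one _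
      have h4 : |Real.cos (2 * n * π * x)| ≤ 1 := Real.abs_cos_le_one _
      have h5 : |((k:ℝ)+1)^2| = ((k:ℝ)+1)^2 := abs_of_pos hk
      calc |x| * (|Real.sin (((k:ℝ) + 1) * (2 * π * x))| / |((k:ℝ)+1)^2|) * |Real.cos (2 * n * π * x)|
          ≤ 1 * (1 / ((k:ℝ)+1)^2) * 1 := by
            rw [h5]
            gcongr
        _ = 1/((k:ℝ)+1)^2 := by ring
  have hsummable : Summable (fun k : ℕ => (1:ℝ)/((k:ℝ)+1)^2) := by
    have h1 : Summable (fun k : ℕ => (1:ℝ)/(k:ℝ)^2) := summable_one_div_nat_pow.mpr one_lt_two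
    have := (_root_.summable_nat_add_iff 1).mpr h1
    simpa using this
  have hF_sum : Summable (fun k : ℕ => ∫ x in Set.Ioc (0:ℝ) 1, ‖f k x‖) := by
    apply Summable.of_nonneg_of_le _ hbound hsummable
    intro k
    exact MeasureTheory.integral_nonneg (fun x => norm_nonneg _)
  -- the swap
  have hswap : (∫ x in (0:ℝ)..1, x * Cl2 (2 * π * x) * Real.cos (2 * n * π * x))
      = ∑' k : ℕ, ∫ x in Set.Ioc (0:ℝ) 1, f k x := by
    rw [intervalIntegral.integral_of_le zero_le_one]
    rw [MeasureTheory.integral_tsum_of_summable_integral_norm hint hF_sum]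
    apply MeasureTheory.setIntegral_congr_fun measurableSet_Ioc
    intro x _
    exact hpt x
  -- value of each integral
  have hval : ∀ k : ℕ, (∫ x in Set.Ioc (0:ℝ) 1, f k x)
      = -(1/(4*π)) * ((1/((k:ℝ)+1)^2) * (1 / (((k:ℝ)+1) + n)
          + if k + 1 = n then 0 else 1 / (((k:ℝ)+1) - n))) := by
    intro k
    rw [← intervalIntegral.integral_of_le zero_le_one]
    have he : ∀ x : ℝ, f k x = (1/((k:ℝ)+1)^2)
        * (x * Real.sin (2 * π * ((k:ℕ)+1:ℕ) * x) * Real.cos (2 * π * n * x)) := by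
      intro x
      rw [hf]
      push_cast
      rw [show 2 * π * ((k:ℝ)+1) * x = ((k:ℝ)+1) * (2 * π * x) by ring,
          show 2 * π * (n:ℝ) * x = 2 * (n:ℝ) * π * x by ring]
      ring
    simp only [he]
    rw [intervalIntegral.integral_const_mul, integral_x_sin_cos (k+1) n (by omega) hn]
    have hcond : ((((k:ℕ)+1:ℕ):ℝ) = (n:ℝ)) ↔ (k + 1 = n) := by
      constructor
      · intro h; exact_mod_cast h
      · intro h; exact_mod_cast h
    push_cast
    by_cases hkn : k + 1 = n
    · rw [if_pos (by exact_mod_cast hkn), if_pos hkn]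
      ring
    · rw [if_neg (by intro hc; exact hkn (by exact_mod_cast hc)), if_neg hkn]
      ring
  -- the HasSum for the series
  have hP : HasSum (fun k : ℕ => (1/(n:ℝ)^2) * (1/(((k:ℝ)+1) + n) - 1/((k:ℝ)+1)))
      (-(harmonic n : ℝ)/(n:ℝ)^2) := by
    have := ((telescope_harmonic n).neg).mul_left (1/(n:ℝ)^2)
    have he : (fun k : ℕ => 1/(n:ℝ)^2 * -(1/((k:ℝ)+1) - 1/((k:ℝ)+1+(n:ℝ))))
        = fun k : ℕ => (1/(n:ℝ)^2) * (1/(((k:ℝ)+1) + n) - 1/((k:ℝ)+1)) := by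
      funext k; ring
    rw [he] at this
    convert this using 1
    · rfl
    ring
  have hQ := hasSum_Q n hn
  have hPQ := hP.add hQ
  -- identify the integrand series with P + Q scaled
  have hterm : ∀ k : ℕ, (∫ x in Set.Ioc (0:ℝ) 1, f k x)
      = -(1/(4*π)) * ((1/(n:ℝ)^2) * (1/(((k:ℝ)+1) + n) - 1/((k:ℝ)+1))
        + (if k + 1 = n then 1/(n:ℝ)^3
            else (1/(n:ℝ)^2) * (1/((k:ℝ)+1-(n:ℝ)) - 1/((k:ℝ)+1)))) := by
    intro k
    rw [hval k]
    congr 1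
    by_cases hkn : k + 1 = n
    · rw [if_pos hkn, if_pos hkn]
      have : ((k:ℝ)+1) = (n:ℝ) := by exact_mod_cast hkn
      rw [this]
      have hn0 : (n:ℝ) ≠ 0 := ne_of_gt hnR
      field_simp
      ring
    · rw [if_neg hkn, if_neg hkn]
      have hm0 : ((k:ℝ)+1) ≠ 0 := by positivity
      have hn0 : (n:ℝ) ≠ 0 := ne_of_gt hnR
      have hmn0 : ((k:ℝ)+1) + n ≠ 0 := by positivity
      have hmn1 : ((k:ℝ)+1) - n ≠ 0 := by
        intro hc
        apply hkn
        have : ((k:ℝ)+1) = (n:ℝ) := by linarith [sub_eq_zero.mp hc]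
        exact_mod_cast this
      field_simp
      ring
  have hsum := hPQ.mul_left (-(1/(4*π)))
  have hfun : (fun k : ℕ => ∫ x in Set.Ioc (0:ℝ) 1, f k x)
      = fun k : ℕ => -(1/(4*π)) * ((1/(n:ℝ)^2) * (1/(((k:ℝ)+1) + n) - 1/((k:ℝ)+1))
        + (if k + 1 = n then 1/(n:ℝ)^3
            else (1/(n:ℝ)^2) * (1/((k:ℝ)+1-(n:ℝ)) - 1/((k:ℝ)+1)))) := funext hterm
  rw [hswap, hfun, hsum.tsum_eq]
  -- final algebra
  have hrel : ((harmonic (n-1) : ℚ) : ℝ) = (harmonic n : ℝ) - 1/(n:ℝ) := by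
    obtain ⟨m, rfl⟩ : ∃ m, n = m + 1 := ⟨n - 1, by omega⟩
    rw [show (m + 1 : ℕ) - 1 = m by omega, harmonic_succ]
    push_cast
    ring
  rw [hrel]
  have hn0 : (n:ℝ) ≠ 0 := ne_of_gt hnR
  field_simp
  ring
end

section
/- ∫₀¹ x²·log(sin(πx)) dx = −(1/3)·log 2 − ζ(3)/(2π²). -/
open Real MeasureTheory Set Filter intervalIntegral Topology

set_option maxHeartbeats 1000000

-- piece 1: antiderivative integral
lemma integral_xsq_cos (a : ℝ) (ha : a ≠ 0) :
    ∫ x in (0:ℝ)..1, x ^ 2 * Real.cos (a * x)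
      = Real.sin a / a + 2 * Real.cos a / a ^ 2 - 2 * Real.sin a / a ^ 3 := by
  have key : ∀ x : ℝ, HasDerivAt
      (fun x : ℝ => x ^ 2 * Real.sin (a * x) / a + 2 * x * Real.cos (a * x) / a ^ 2
        - 2 * Real.sin (a * x) / a ^ 3) (x ^ 2 * Real.cos (a * x)) x := by
    intro x
    have hlin : HasDerivAt (fun x : ℝ => a * x) a x := by
      simpa using (hasDerivAt_id x).const_mul a
    have hs : HasDerivAt (fun x : ℝ => Real.sin (a * x)) (Real.cos (a * x) * a) x :=
      (Real.hasDerivAt_sin (a * x)).comp x hlin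
    have hc : HasDerivAt (fun x : ℝ => Real.cos (a * x)) (-Real.sin (a * x) * a) x :=
      (Real.hasDerivAt_cos (a * x)).comp x hlin
    have h1 : HasDerivAt (fun x : ℝ => x ^ 2 * Real.sin (a * x) / a)
        ((2 * x * Real.sin (a * x) + x ^ 2 * (Real.cos (a * x) * a)) / a) x := by
      exact (((hasDerivAt_pow 2 x).mul hs).div_const a).congr_deriv (by ring)
    have h2 : HasDerivAt (fun x : ℝ => 2 * x * Real.cos (a * x) / a ^ 2)
        ((2 * Real.cos (a * x) + 2 * x * (-Real.sin (a * x) * a)) / a ^ 2) x := by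
      have : HasDerivAt (fun x : ℝ => 2 * x) 2 x := by simpa using (hasDerivAt_id x).const_mul 2
      exact ((this.mul hc).div_const _).congr_deriv (by ring)
    have h3 : HasDerivAt (fun x : ℝ => 2 * Real.sin (a * x) / a ^ 3)
        (2 * (Real.cos (a * x) * a) / a ^ 3) x := ((hs.const_mul 2).div_const _).congr_deriv (by ring)
    have := (h1.add h2).sub h3
    refine this.congr_deriv ?_
    field_simp
    ring
  have hint : IntervalIntegrable (fun x : ℝ => x ^ 2 * Real.cos (a * x)) volume 0 1 := by
    apply Continuous.intervalIntegrable
    fun_prop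
  have := intervalIntegral.integral_eq_sub_of_hasDerivAt (fun x _ => key x) hint
  rw [this]
  simp

lemma integral_term (r : ℝ) (n : ℕ) :
    ∫ x in (0:ℝ)..1, x ^ 2 * (r ^ n * Real.cos ((n : ℝ) * (2 * π * x)) / n)
      = r ^ n / (2 * π ^ 2 * n ^ 3) := by
  rcases Nat.eq_zero_or_pos n with rfl | hn
  · simp
  have hπ := Real.pi_ne_zero
  have hn' : (n : ℝ) ≠ 0 := Nat.cast_ne_zero.mpr hn.ne'
  have ha : (2 * π * n : ℝ) ≠ 0 := by positivity
  have h1 : ∀ x : ℝ, x ^ 2 * (r ^ n * Real.cos ((n : ℝ) * (2 * π * x)) / n)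
      = (r ^ n / n) * (x ^ 2 * Real.cos ((2 * π * n) * x)) := by
    intro x; rw [show (n : ℝ) * (2 * π * x) = (2 * π * n) * x by ring]; ring
  simp_rw [h1]
  rw [intervalIntegral.integral_const_mul, integral_xsq_cos _ ha]
  have hs : Real.sin (2 * π * n) = 0 := by
    rw [show (2 * π * n : ℝ) = (2 * n : ℕ) * π by push_cast; ring, Real.sin_nat_mul_pi]
  have hc : Real.cos (2 * π * n) = 1 := by
    rw [show (2 * π * n : ℝ) = (n : ℕ) * (2 * π) by push_cast; ring, Real.cos_nat_mul_two_pi]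
  rw [hs, hc]
  field_simp
  ring

lemma hasSum_cos_div (r θ : ℝ) (hr0 : 0 ≤ r) (hr1 : r < 1) :
    HasSum (fun n : ℕ => r ^ n * Real.cos ((n : ℝ) * θ) / n)
      (-(1 / 2) * Real.log (1 - 2 * r * Real.cos θ + r ^ 2)) := by
  set z : ℂ := (r : ℂ) * Complex.exp (θ * Complex.I) with hzdef
  have hz : ‖z‖ < 1 := by
    rw [hzdef, norm_mul]
    simp only [Complex.norm_exp_ofReal_mul_I, mul_one,
      Complex.norm_real, Real.norm_eq_abs, abs_of_nonneg hr0]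
    exact hr1
  have H := Complex.hasSum_re (Complex.hasSum_taylorSeries_neg_log hz)
  have hterm : ∀ n : ℕ, (z ^ n / n).re = r ^ n * Real.cos ((n : ℝ) * θ) / n := by
    intro n
    have h1 : z ^ n = ((r ^ n : ℝ) : ℂ) * Complex.exp (((n : ℝ) * θ : ℝ) * Complex.I) := by
      rw [hzdef, mul_pow, ← Complex.exp_nat_mul]
      push_cast
      ring_nf
    rw [h1, Complex.div_natCast_re, Complex.re_ofReal_mul, Complex.exp_ofReal_mul_I_re]
  have hsum : (-Complex.log (1 - z)).re = -(1 / 2) * Real.log (1 - 2 * r * Real.cos θ + r ^ 2) := by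
    rw [Complex.neg_re, Complex.log_re]
    have habs : ‖1 - z‖ ^ 2 = 1 - 2 * r * Real.cos θ + r ^ 2 := by
      rw [Complex.sq_norm, Complex.normSq_apply]
      have hre : (1 - z).re = 1 - r * Real.cos θ := by
        simp [hzdef, Complex.exp_mul_I, ← Complex.ofReal_cos, ← Complex.ofReal_sin]
      have him : (1 - z).im = -(r * Real.sin θ) := by
        simp [hzdef, Complex.exp_mul_I, ← Complex.ofReal_cos, ← Complex.ofReal_sin]
      rw [hre, him]
      nlinarith [Real.sin_sq_add_cos_sq θ]
    have h3 : Real.log (1 - 2 * r * Real.cos θ + r ^ 2) = 2 * Real.log ‖1 - z‖ := by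
      rw [← habs, Real.log_pow]
      push_cast; ring
    rw [h3]; ring
  rw [← hsum]
  exact H.congr_fun fun n => (hterm n).symm

lemma zeta3_re : (riemannZeta 3).re = ∑' n : ℕ, 1 / ((n : ℝ) + 1) ^ 3 := by
  rw [zeta_eq_tsum_one_div_nat_add_one_cpow (by norm_num)]
  have h : ∀ n : ℕ, (1 : ℂ) / ((n : ℂ) + 1) ^ (3 : ℂ) = ((1 / ((n : ℝ) + 1) ^ 3 : ℝ) : ℂ) := by
    intro n
    rw [show (3 : ℂ) = ((3 : ℕ) : ℂ) by norm_num, Complex.cpow_natCast]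
    push_cast
    ring
  simp_rw [h]
  rw [← Complex.ofReal_tsum]
  exact Complex.ofReal_re _

lemma hsum3 : Summable (fun n : ℕ => 1 / (n : ℝ) ^ 3) :=
  Real.summable_one_div_nat_pow.mpr (by norm_num)

lemma cn_eq (n : ℕ) : 1 / (2 * π ^ 2 * (n : ℝ) ^ 3) = (1 / (2 * π ^ 2)) * (1 / (n : ℝ) ^ 3) := by
  rw [div_mul_eq_div_div, div_eq_mul_one_div]

lemma tsum_cn : ∑' n : ℕ, 1 / (2 * π ^ 2 * (n : ℝ) ^ 3) = (riemannZeta 3).re / (2 * π ^ 2) := by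
  simp_rw [cn_eq]
  rw [tsum_mul_left, hsum3.tsum_eq_zero_add]
  rw [zeta3_re]
  push_cast
  simp
  ring

lemma summable_cn : Summable (fun n : ℕ => 1 / (2 * π ^ 2 * (n : ℝ) ^ 3)) := by
  simp_rw [cn_eq]
  exact hsum3.mul_left _

lemma sin_pi_lb {x : ℝ} (h0 : 0 ≤ x) (h1 : x ≤ 1) : 2 * x * (1 - x) ≤ Real.sin (π * x) := by
  have hπ := Real.pi_pos
  rcases le_or_gt x (1 / 2) with h | h
  · have hj := Real.mul_le_sin (x := π * x) (by positivity) (by nlinarith)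
    have h2 : 2 / π * (π * x) = 2 * x := by field_simp
    nlinarith
  · have hs : Real.sin (π * x) = Real.sin (π * (1 - x)) := by
      rw [show π * (1 - x) = π - π * x by ring, Real.sin_pi_sub]
    have hj := Real.mul_le_sin (x := π * (1 - x)) (by nlinarith) (by nlinarith)
    have h2 : 2 / π * (π * (1 - x)) = 2 * (1 - x) := by field_simp
    rw [hs]
    nlinarith

lemma delta_bounds {r x : ℝ} (hr : 1 / 2 ≤ r) (hr1 : r ≤ 1) (h0 : 0 < x) (h1 : x < 1) :
    8 * (x * (1 - x)) ^ 2 ≤ 1 - 2 * r * Real.cos (2 * π * x) + r ^ 2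
      ∧ 1 - 2 * r * Real.cos (2 * π * x) + r ^ 2 ≤ 4 := by
  have hs := sin_pi_lb h0.le h1.le
  have hsq : Real.sin (π * x) ^ 2 + Real.cos (π * x) ^ 2 = 1 := Real.sin_sq_add_cos_sq _
  have hc2 : Real.cos (2 * π * x) = 2 * Real.cos (π * x) ^ 2 - 1 := by
    rw [show 2 * π * x = 2 * (π * x) by ring, Real.cos_two_mul]
  have hcb := Real.neg_one_le_cos (2 * π * x)
  have hcb' := Real.cos_le_one (2 * π * x)
  have hxx : 0 ≤ 2 * x * (1 - x) := by nlinarith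
  constructor
  · nlinarith [sq_nonneg (1 - r), sq_nonneg (Real.sin (π * x)), sq_nonneg (Real.cos (π * x))]
  · nlinarith

lemma abs_log_delta_le {r x : ℝ} (hr : 1 / 2 ≤ r) (hr1 : r ≤ 1) (h0 : 0 < x) (h1 : x < 1) :
    |Real.log (1 - 2 * r * Real.cos (2 * π * x) + r ^ 2)|
      ≤ Real.log 8 + 2 * |Real.log x| + 2 * |Real.log (1 - x)| := by
  obtain ⟨hlb, hub⟩ := delta_bounds hr hr1 h0 h1
  have hpos : (0 : ℝ) < 8 * (x * (1 - x)) ^ 2 := by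
    have : 0 < x * (1 - x) := by nlinarith
    positivity
  have hlog8 : (0:ℝ) ≤ Real.log 8 := Real.log_nonneg (by norm_num)
  have hup : Real.log (1 - 2 * r * Real.cos (2 * π * x) + r ^ 2) ≤ Real.log 8 := by
    calc Real.log (1 - 2 * r * Real.cos (2 * π * x) + r ^ 2) ≤ Real.log 4 :=
          Real.log_le_log (by linarith) hub
      _ ≤ Real.log 8 := Real.log_le_log (by norm_num) (by norm_num)
  have hlo : Real.log (8 * (x * (1 - x)) ^ 2)
      ≤ Real.log (1 - 2 * r * Real.cos (2 * π * x) + r ^ 2) := Real.log_le_log hpos hlb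
  have hexp : Real.log (8 * (x * (1 - x)) ^ 2)
      = Real.log 8 + 2 * Real.log x + 2 * Real.log (1 - x) := by
    have hx1 : (0:ℝ) < 1 - x := by linarith
    rw [Real.log_mul (by norm_num) (by positivity), Real.log_pow,
      Real.log_mul h0.ne' hx1.ne']
    push_cast
    ring
  rw [abs_le]
  constructor
  · have h1' : -(Real.log 8 + 2 * Real.log x + 2 * Real.log (1 - x))
        ≤ Real.log 8 + 2 * |Real.log x| + 2 * |Real.log (1 - x)| := by
      have := neg_abs_le (Real.log x)
      have := neg_abs_le (Real.log (1 - x))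
      nlinarith [abs_nonneg (Real.log x), abs_nonneg (Real.log (1 - x))]
    nlinarith [hlo, hexp ▸ hlo]
  · nlinarith [abs_nonneg (Real.log x), abs_nonneg (Real.log (1 - x))]

lemma integrableOn_abs_log : IntegrableOn (fun x : ℝ => |Real.log x|) (Ioo 0 1) := by
  have h : IntegrableOn (fun x : ℝ => -Real.log x) (Ioc (0:ℝ) 1) := by
    apply integrableOn_deriv_of_nonneg (g := fun x => x - x * Real.log x)
    · exact (continuous_id.sub Real.continuous_mul_log).continuousOn
    · intro x hx
      have hd : HasDerivAt (fun y : ℝ => y * Real.log y) (Real.log x + 1) x := by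
        have := (hasDerivAt_id x).mul (Real.hasDerivAt_log hx.1.ne')
        refine this.congr_deriv ?_
        simp [hx.1.ne']
      exact ((hasDerivAt_id x).sub hd).congr_deriv (by ring)
    · intro x hx
      simp only [neg_nonneg]
      exact Real.log_nonpos hx.1.le hx.2.le
  have h2 : IntegrableOn (fun x : ℝ => -Real.log x) (Ioo (0:ℝ) 1) :=
    h.mono_set Ioo_subset_Ioc_self
  apply h2.congr_fun _ measurableSet_Ioo
  intro x hx
  simp only []
  rw [abs_of_nonpos (Real.log_nonpos hx.1.le hx.2.le)]

lemma integrableOn_abs_log' : IntegrableOn (fun x : ℝ => |Real.log (1 - x)|) (Ioo 0 1) := by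
  have h : IntegrableOn (fun x : ℝ => -Real.log (1 - x)) (Ioc (0:ℝ) 1) := by
    apply integrableOn_deriv_of_nonneg (g := fun x => (1 - x) * Real.log (1 - x) + x)
    · apply ContinuousOn.add _ continuousOn_id
      exact (Real.continuous_mul_log.comp (continuous_const.sub continuous_id)).continuousOn
    · intro x hx
      have h1x : (0:ℝ) < 1 - x := by simp at hx; linarith [hx.2]
      have hd : HasDerivAt (fun y : ℝ => y * Real.log y) (Real.log (1 - x) + 1) (1 - x) := by
        have := (hasDerivAt_id (1 - x)).mul (Real.hasDerivAt_log h1x.ne')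
        refine this.congr_deriv ?_
        simp [h1x.ne']
      have hlin : HasDerivAt (fun y : ℝ => 1 - y) (-1) x := by
        exact ((hasDerivAt_const x (1:ℝ)).sub (hasDerivAt_id x)).congr_deriv (by norm_num)
      have := (hd.comp x hlin).add (hasDerivAt_id x)
      refine this.congr_deriv ?_
      ring
    · intro x hx
      simp only [neg_nonneg]
      exact Real.log_nonpos (by simp at hx; linarith [hx.2]) (by simp at hx; linarith [hx.1])
  have h2 : IntegrableOn (fun x : ℝ => -Real.log (1 - x)) (Ioo (0:ℝ) 1) :=
    h.mono_set Ioo_subset_Ioc_self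
  apply h2.congr_fun _ measurableSet_Ioo
  intro x hx
  simp only []
  rw [abs_of_nonpos (Real.log_nonpos (by linarith [hx.2]) (by linarith [hx.1]))]

lemma integral_G (r : ℝ) (hr0 : 0 ≤ r) (hr1 : r < 1) :
    ∫ x in Ioo (0:ℝ) 1, x ^ 2 * (-(1 / 2) * Real.log (1 - 2 * r * Real.cos (2 * π * x) + r ^ 2))
      = ∑' n : ℕ, r ^ n / (2 * π ^ 2 * n ^ 3) := by
  set F : ℕ → ℝ → ℝ := fun n x => x ^ 2 * (r ^ n * Real.cos ((n : ℝ) * (2 * π * x)) / n) with hF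
  have hFc : ∀ n, Continuous (F n) := by intro n; rw [hF]; fun_prop
  have hFint : ∀ n, Integrable (F n) (volume.restrict (Ioo (0:ℝ) 1)) := fun n =>
    ((hFc n).integrableOn_Icc (a := 0) (b := 1)).mono_set Ioo_subset_Icc_self
  have hptbound : ∀ n, ∀ x ∈ Ioo (0:ℝ) 1, ‖F n x‖ ≤ r ^ n := by
    intro n x hx
    rcases Nat.eq_zero_or_pos n with rfl | hn
    · simp [hF]
    have hx2 : x ^ 2 ≤ 1 := by nlinarith [hx.1.le, hx.2.le]
    have hcos : |Real.cos ((n : ℝ) * (2 * π * x))| ≤ 1 := Real.abs_cos_le_one _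
    have hn1 : (1 : ℝ) ≤ n := by exact_mod_cast hn
    have hrn : (0:ℝ) ≤ r ^ n := pow_nonneg hr0 n
    rw [hF]
    simp only [Real.norm_eq_abs, abs_mul, abs_div, abs_pow, abs_abs]
    rw [abs_of_nonneg hr0, Nat.abs_cast, sq_abs]
    have hd : r ^ n * |Real.cos ((n : ℝ) * (2 * π * x))| / n ≤ r ^ n := by
      rw [div_le_iff₀ (show (0:ℝ) < n by exact_mod_cast hn)]
      nlinarith [abs_nonneg (Real.cos ((n : ℝ) * (2 * π * x)))]
    have ht : (0:ℝ) ≤ r ^ n * |Real.cos ((n : ℝ) * (2 * π * x))| / n := by positivity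
    nlinarith [sq_nonneg x]
  have hnormint : ∀ n, ∫ x in Ioo (0:ℝ) 1, ‖F n x‖ ≤ r ^ n := by
    intro n
    have h1 : ∫ x in Ioo (0:ℝ) 1, ‖F n x‖ ≤ ∫ _x in Ioo (0:ℝ) 1, r ^ n := by
      apply setIntegral_mono_on (hFint n).norm (integrableOn_const (by simp))
        measurableSet_Ioo
      exact hptbound n
    simpa using h1
  have hsumnorm : Summable fun n => ∫ x in Ioo (0:ℝ) 1, ‖F n x‖ := by
    apply Summable.of_nonneg_of_le (fun n => integral_nonneg fun x => norm_nonneg _) hnormint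
    exact summable_geometric_of_lt_one hr0 hr1
  have H := MeasureTheory.hasSum_integral_of_summable_integral_norm hFint hsumnorm
  have hinner : (fun x : ℝ => ∑' n, F n x)
      = fun x => x ^ 2 * (-(1 / 2) * Real.log (1 - 2 * r * Real.cos (2 * π * x) + r ^ 2)) := by
    funext x
    rw [hF]
    rw [tsum_mul_left, (hasSum_cos_div r (2 * π * x) hr0 hr1).tsum_eq]
  have hterm : ∀ n, ∫ x in Ioo (0:ℝ) 1, F n x = r ^ n / (2 * π ^ 2 * n ^ 3) := by
    intro n
    rw [← MeasureTheory.integral_Ioc_eq_integral_Ioo, ← intervalIntegral.integral_of_le zero_le_one]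
    exact integral_term r n
  have := H.tsum_eq
  rw [hinner] at this
  rw [← this]
  exact tsum_congr hterm

/-- `∫₀¹ x²·log(sin(πx)) dx = −(1/3)·log 2 − ζ(3)/(2π²)`. -/
theorem integral_xsq_log_sin :
    ∫ x in (0:ℝ)..1, x ^ 2 * Real.log (Real.sin (π * x)) =
      -(1 / 3) * Real.log 2 - (riemannZeta 3).re / (2 * π ^ 2) := by
  set μ := volume.restrict (Ioo (0:ℝ) 1) with hμ
  set rs : ℕ → ℝ := fun k => 1 - 1 / (k + 2) with hrs
  have hrs_mem : ∀ k : ℕ, 1 / 2 ≤ rs k ∧ rs k < 1 := by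
    intro k
    have hk0 : (0:ℝ) ≤ (k:ℝ) := Nat.cast_nonneg k
    have hkpos : (0:ℝ) < (k:ℝ) + 2 := by linarith
    constructor
    · have : 1 / ((k:ℝ) + 2) ≤ 1 / 2 := one_div_le_one_div_of_le (by norm_num) (by linarith)
      simp only [hrs]; linarith
    · have : 0 < 1 / ((k:ℝ) + 2) := by positivity
      simp only [hrs]; linarith
  have hr0 : ∀ k, (0:ℝ) ≤ rs k := fun k => le_trans (by norm_num) (hrs_mem k).1
  have hrlim : Tendsto rs atTop (𝓝 1) := by
    have h2 : Tendsto (fun k : ℕ => ((k:ℝ) + 2)) atTop atTop :=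
      tendsto_atTop_add_const_right _ 2 tendsto_natCast_atTop_atTop
    have h3 : Tendsto (fun k : ℕ => 1 / ((k:ℝ) + 2)) atTop (𝓝 0) := by
      simpa [one_div, Pi.inv_def] using h2.inv_tendsto_atTop
    have h4 : Tendsto (fun k : ℕ => (1:ℝ) - 1 / ((k:ℝ) + 2)) atTop (𝓝 (1 - 0)) :=
      tendsto_const_nhds.sub h3
    rw [hrs]
    simpa [one_div] using h4
  set F : ℕ → ℝ → ℝ := fun k x =>
    x ^ 2 * ((1 / 2) * Real.log (1 - 2 * rs k * Real.cos (2 * π * x) + rs k ^ 2) - Real.log 2)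
    with hF
  have hΔpos : ∀ k, ∀ x : ℝ, 0 < 1 - 2 * rs k * Real.cos (2 * π * x) + rs k ^ 2 := by
    intro k x
    have h1 : (0:ℝ) < 1 - rs k := by linarith [(hrs_mem k).2]
    have h2 := pow_pos h1 2
    nlinarith [Real.cos_le_one (2 * π * x), hr0 k]
  have hFcont : ∀ k, Continuous (F k) := by
    intro k
    apply Continuous.mul (by fun_prop)
    apply Continuous.sub _ continuous_const
    apply Continuous.mul continuous_const
    exact Continuous.log (by fun_prop) (fun x => (hΔpos k x).ne')
  set bound : ℝ → ℝ := fun x => Real.log 8 + Real.log 2 + |Real.log x| + |Real.log (1 - x)|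
    with hbd
  have hbound_int : Integrable bound μ := by
    have hc : IntegrableOn (fun _ : ℝ => Real.log 8 + Real.log 2) (Ioo (0:ℝ) 1) :=
      integrableOn_const (by simp [Real.volume_Ioo])
    exact (hc.add integrableOn_abs_log).add integrableOn_abs_log'
  have hb : ∀ k, ∀ᵐ x ∂μ, ‖F k x‖ ≤ bound x := by
    intro k
    filter_upwards [ae_restrict_mem measurableSet_Ioo] with x hx
    set L := Real.log (1 - 2 * rs k * Real.cos (2 * π * x) + rs k ^ 2) with hL
    have hLb := abs_log_delta_le (hrs_mem k).1 (hrs_mem k).2.le hx.1 hx.2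
    have hx2 : x ^ 2 ≤ 1 := by nlinarith [hx.1.le, hx.2.le]
    have hlog2 : (0:ℝ) ≤ Real.log 2 := Real.log_nonneg (by norm_num)
    have hlog8 : (0:ℝ) ≤ Real.log 8 := Real.log_nonneg (by norm_num)
    have h21 := abs_add_le ((1 / 2) * L) (-(Real.log 2))
    rw [abs_neg, ← sub_eq_add_neg, abs_mul, abs_of_nonneg hlog2,
      abs_of_nonneg (by norm_num : (0:ℝ) ≤ (1:ℝ)/2)] at h21
    calc ‖F k x‖ = x ^ 2 * |(1 / 2) * L - Real.log 2| := by
          rw [hF, Real.norm_eq_abs]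
          simp only []
          rw [abs_mul, abs_of_nonneg (sq_nonneg x)]
      _ ≤ 1 * |(1 / 2) * L - Real.log 2| :=
          mul_le_mul_of_nonneg_right hx2 (abs_nonneg _)
      _ ≤ bound x := by
          rw [one_mul, hbd]
          have := abs_nonneg (Real.log x)
          have := abs_nonneg (Real.log (1 - x))
          nlinarith [hLb, h21]
  have hlim : ∀ᵐ x ∂μ, Tendsto (fun k => F k x) atTop
      (𝓝 (x ^ 2 * Real.log (Real.sin (π * x)))) := by
    filter_upwards [ae_restrict_mem measurableSet_Ioo] with x hx
    have hπ := Real.pi_pos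
    have hsin : 0 < Real.sin (π * x) :=
      Real.sin_pos_of_pos_of_lt_pi (by nlinarith [hx.1]) (by nlinarith [hx.2])
    have hval : 1 - 2 * 1 * Real.cos (2 * π * x) + 1 ^ 2 = (2 * Real.sin (π * x)) ^ 2 := by
      have h1 : Real.cos (2 * π * x) = 2 * Real.cos (π * x) ^ 2 - 1 := by
        rw [show 2 * π * x = 2 * (π * x) by ring, Real.cos_two_mul]
      nlinarith [Real.sin_sq_add_cos_sq (π * x)]
    have hvpos : 0 < 1 - 2 * 1 * Real.cos (2 * π * x) + 1 ^ 2 := by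
      rw [hval]; positivity
    have hcont : ContinuousAt (fun r : ℝ =>
        x ^ 2 * ((1 / 2) * Real.log (1 - 2 * r * Real.cos (2 * π * x) + r ^ 2) - Real.log 2)) 1 := by
      apply ContinuousAt.mul continuousAt_const
      apply ContinuousAt.sub _ continuousAt_const
      apply ContinuousAt.mul continuousAt_const
      have hδ : ContinuousAt (fun r : ℝ => 1 - 2 * r * Real.cos (2 * π * x) + r ^ 2) 1 := by
        fun_prop
      exact hδ.log hvpos.ne'
    have heq : x ^ 2 * ((1 / 2) * Real.log (1 - 2 * 1 * Real.cos (2 * π * x) + 1 ^ 2)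
        - Real.log 2) = x ^ 2 * Real.log (Real.sin (π * x)) := by
      rw [hval, show (2 * Real.sin (π * x)) ^ 2 = (2 * Real.sin (π * x)) ^ (2:ℕ) by norm_num,
        Real.log_pow, Real.log_mul two_ne_zero hsin.ne']
      ring
    have h5 := hcont.tendsto.comp hrlim
    rw [heq] at h5
    exact h5
  have hDCT := MeasureTheory.tendsto_integral_of_dominated_convergence bound
    (fun k => (hFcont k).aestronglyMeasurable) hbound_int hb hlim
  have hx2int : ∫ x in Ioo (0:ℝ) 1, (x:ℝ) ^ 2 = 1 / 3 := by
    rw [← MeasureTheory.integral_Ioc_eq_integral_Ioo, ← intervalIntegral.integral_of_le zero_le_one,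
      integral_pow]
    norm_num
  have hFk : ∀ k, ∫ x, F k x ∂μ
      = -(∑' n : ℕ, rs k ^ n / (2 * π ^ 2 * (n:ℝ) ^ 3)) - Real.log 2 / 3 := by
    intro k
    have hGcont : Continuous (fun x : ℝ =>
        x ^ 2 * (-(1 / 2) * Real.log (1 - 2 * rs k * Real.cos (2 * π * x) + rs k ^ 2))) := by
      apply Continuous.mul (by fun_prop)
      apply Continuous.mul continuous_const
      exact Continuous.log (by fun_prop) (fun x => (hΔpos k x).ne')
    have hGint : Integrable (fun x : ℝ =>
        x ^ 2 * (-(1 / 2) * Real.log (1 - 2 * rs k * Real.cos (2 * π * x) + rs k ^ 2))) μ :=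
      (hGcont.integrableOn_Icc (a := 0) (b := 1)).mono_set Ioo_subset_Icc_self
    have h2int : Integrable (fun x : ℝ => x ^ 2 * Real.log 2) μ :=
      ((continuous_pow 2).mul continuous_const).integrableOn_Icc (a := 0) (b := 1)
        |>.mono_set Ioo_subset_Icc_self
    have hFeq : F k = fun x =>
        -(x ^ 2 * (-(1 / 2) * Real.log (1 - 2 * rs k * Real.cos (2 * π * x) + rs k ^ 2)))
          - x ^ 2 * Real.log 2 := by
      funext x; rw [hF]; ring
    have hGnegint : Integrable (fun x : ℝ =>
        -(x ^ 2 * (-(1 / 2) * Real.log (1 - 2 * rs k * Real.cos (2 * π * x) + rs k ^ 2)))) μ :=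
      (hGcont.neg.integrableOn_Icc (a := 0) (b := 1)).mono_set Ioo_subset_Icc_self
    rw [hFeq, MeasureTheory.integral_sub hGnegint h2int, MeasureTheory.integral_neg]
    have e1 : ∫ x, x ^ 2 * (-(1 / 2) * Real.log (1 - 2 * rs k * Real.cos (2 * π * x)
        + rs k ^ 2)) ∂μ = ∑' n : ℕ, rs k ^ n / (2 * π ^ 2 * (n:ℝ) ^ 3) := by
      rw [hμ]
      exact integral_G (rs k) (hr0 k) (hrs_mem k).2
    have e2 : ∫ x, x ^ 2 * Real.log 2 ∂μ = Real.log 2 / 3 := by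
      rw [MeasureTheory.integral_mul_const, hμ]
      rw [show ∫ x in Ioo (0:ℝ) 1, (x:ℝ) ^ 2 = 1/3 from hx2int]
      ring
    rw [e1, e2]
  have hlimS : Tendsto (fun k => ∑' n : ℕ, rs k ^ n / (2 * π ^ 2 * (n:ℝ) ^ 3)) atTop
      (𝓝 (∑' n : ℕ, 1 / (2 * π ^ 2 * (n:ℝ) ^ 3))) := by
    apply tendsto_tsum_of_dominated_convergence summable_cn
    · intro n
      have := (hrlim.pow n).div_const (2 * π ^ 2 * (n:ℝ) ^ 3)
      simpa using this
    · apply Filter.Eventually.of_forall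
      intro k n
      have hD : (0:ℝ) ≤ 2 * π ^ 2 * (n:ℝ) ^ 3 := by positivity
      rw [Real.norm_eq_abs, abs_div, abs_of_nonneg (pow_nonneg (hr0 k) n), abs_of_nonneg hD]
      rcases eq_or_lt_of_le hD with h0 | h0
      · rw [← h0]; simp
      · gcongr
        exact pow_le_one₀ (hr0 k) (hrs_mem k).2.le
  have hfinal : Tendsto (fun k => -(∑' n : ℕ, rs k ^ n / (2 * π ^ 2 * (n:ℝ) ^ 3))
      - Real.log 2 / 3) atTop
      (𝓝 (-(∑' n : ℕ, 1 / (2 * π ^ 2 * (n:ℝ) ^ 3)) - Real.log 2 / 3)) :=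
    hlimS.neg.sub tendsto_const_nhds
  have hDCT2 := hDCT.congr hFk
  have huniq := tendsto_nhds_unique hDCT2 hfinal
  rw [tsum_cn] at huniq
  rw [hμ] at huniq
  rw [intervalIntegral.integral_of_le zero_le_one, MeasureTheory.integral_Ioc_eq_integral_Ioo]
  rw [huniq]
  ring
end
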